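/- Let α > 0 and let h ∈ C¹([0,∞)×[0,∞)) have ‖h‖_X ≤ x, where ‖h‖_X = sup_{u,r≥0}[(1+r+u)²|h(u,r)| + (1+r+u)³|∂h/∂r(u,r)|], and assume |sin h̄(u,r)| ≤ |h(u,r) − h̄(u,r)| for all u ≥ 0, r > 0. Then the metric function g and its radial average ḡ(u,r) = (1/r)∫₀ʳ g(u,s) ds satisfy |g(u,r) − ḡ(u,r)| ≤ α(x² + x⁴)·r²/(12(1+u)³(1+r+u)³) for all u ≥ 0 and r > 0. -/

import Mathlib

noncomputable section
open Real MeasureTheory Set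

/-- Radial average `h̄(u,r) = (1/r)∫₀ʳ h(u,s) ds`. -/
def hbar (h : ℝ → ℝ → ℝ) (u r : ℝ) : ℝ := (1 / r) * ∫ s in (0:ℝ)..r, h u s

/-- Bondi metric function `g`. -/
def gmet (α : ℝ) (h : ℝ → ℝ → ℝ) (u r : ℝ) : ℝ :=
  Real.exp (-α * ∫ s in Set.Ioi r,
    ((h u s - hbar h u s) ^ 2 / s) * (1 + 2 * Real.sin (hbar h u s) ^ 2 / s ^ 2))

/-- Radial average of `g`. -/
def gbarm (α : ℝ) (h : ℝ → ℝ → ℝ) (u r : ℝ) : ℝ := (1 / r) * ∫ s in (0:ℝ)..r, gmet α h u s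

/-- Bondi metric function `g̃`. -/
def gtil (α : ℝ) (h : ℝ → ℝ → ℝ) (u r : ℝ) : ℝ :=
  gbarm α h u r - (α / r) * ∫ s in (0:ℝ)..r,
    s ^ 2 * gmet α h u s *
      (2 * Real.sin (hbar h u s) ^ 2 / s ^ 2 + Real.sin (hbar h u s) ^ 4 / s ^ 4)


private lemma exp_sub_exp_le {a b : ℝ} (hb : b ≤ 0) (hab : a ≤ b) :
    Real.exp b - Real.exp a ≤ b - a := by
  have h1 : Real.exp b * (1 + (a - b)) ≤ Real.exp b * Real.exp (a - b) :=
    mul_le_mul_of_nonneg_left (by linarith [Real.add_one_le_exp (a - b)]) (Real.exp_pos b).le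
  have h2 : Real.exp b * Real.exp (a - b) = Real.exp a := by
    rw [← Real.exp_add]; ring_nf
  have h3 : Real.exp b ≤ 1 := Real.exp_le_one_iff.mpr hb
  nlinarith [Real.exp_pos b]

private lemma hasDerivAt_w (u t : ℝ) : HasDerivAt (fun t : ℝ => 1 + t + u) 1 t := by
  simpa using ((hasDerivAt_id t).const_add 1).add_const u

private lemma hasDerivAt_winv (u t : ℝ) (h : (1 : ℝ) + t + u ≠ 0) :
    HasDerivAt (fun t : ℝ => (1 + t + u)⁻¹) (-(1 / (1 + t + u) ^ 2)) t := by
  have := (hasDerivAt_w u t).inv h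
  refine this.congr_deriv ?_
  ring

/-- antiderivative of `t/(1+t+u)^4` -/
private def Afn (u t : ℝ) : ℝ :=
  -(1/2) * ((1 + t + u)⁻¹) ^ 2 + ((1 + u) / 3) * ((1 + t + u)⁻¹) ^ 3

/-- antiderivative of `Afn` -/
private def A2fn (u t : ℝ) : ℝ :=
  (1/2) * (1 + t + u)⁻¹ - ((1 + u) / 6) * ((1 + t + u)⁻¹) ^ 2

private lemma hasDerivAt_Afn (u t : ℝ) (h : (0:ℝ) < 1 + t + u) :
    HasDerivAt (Afn u) (t / (1 + t + u) ^ 4) t := by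
  have h0 : (1:ℝ) + t + u ≠ 0 := ne_of_gt h
  have h1 := ((hasDerivAt_winv u t h0).pow 2).const_mul (-(1/2) : ℝ)
  have h2 := ((hasDerivAt_winv u t h0).pow 3).const_mul ((1 + u)/3 : ℝ)
  have := h1.add h2
  refine this.congr_deriv ?_
  norm_num
  field_simp
  ring

private lemma hasDerivAt_A2fn (u t : ℝ) (h : (0:ℝ) < 1 + t + u) :
    HasDerivAt (A2fn u) (Afn u t) t := by
  have h0 : (1:ℝ) + t + u ≠ 0 := ne_of_gt h
  have h1 := (hasDerivAt_winv u t h0).const_mul ((1/2 : ℝ))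
  have h2 := ((hasDerivAt_winv u t h0).pow 2).const_mul ((1 + u)/6 : ℝ)
  have := h1.sub h2
  refine this.congr_deriv ?_
  unfold Afn
  norm_num
  field_simp
  ring

private lemma hasDerivAt_Nfn (u t : ℝ) (h : (0:ℝ) < 1 + t + u) :
    HasDerivAt (fun t : ℝ => -((1 + t + u)⁻¹)) (((1 + t + u) ^ 2)⁻¹) t := by
  have h0 : (1:ℝ) + t + u ≠ 0 := ne_of_gt h
  have := (hasDerivAt_winv u t h0).neg
  refine this.congr_deriv ?_
  field_simp

private lemma sub_le_of_deriv_le {f : ℝ → ℝ} {x u : ℝ}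
    (hcont : ContinuousOn f (Ici 0))
    (hdiffat : ∀ t : ℝ, 0 < t → DifferentiableAt ℝ f t)
    (hdb : ∀ t : ℝ, 0 < t → deriv f t ≤ x / (1 + t + u) ^ 3)
    (hu : 0 ≤ u) {s t : ℝ} (ht : 0 ≤ t) (hts : t ≤ s) :
    f s - f t ≤ x / 2 * (((1 + t + u) ^ 2)⁻¹ - ((1 + s + u) ^ 2)⁻¹) := by
  have key : AntitoneOn (fun σ => f σ + x / 2 * ((1 + σ + u) ^ 2)⁻¹) (Icc t s) := by
    apply antitoneOn_of_deriv_nonpos (convex_Icc t s)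
    · apply ContinuousOn.add (hcont.mono (fun σ hσ => le_trans ht hσ.1))
      apply ContinuousOn.mul continuousOn_const
      apply ContinuousOn.inv₀ (by fun_prop)
      intro σ hσ
      have h1 : (0:ℝ) < 1 + σ + u := by
        have := le_trans ht hσ.1; linarith
      positivity
    · intro σ hσ
      rw [interior_Icc] at hσ
      have hσ0 : 0 < σ := lt_of_le_of_lt ht hσ.1
      have h1 : (0:ℝ) < 1 + σ + u := by linarith
      have hne : ((1:ℝ) + σ + u) ^ 2 ≠ 0 := by positivity
      have hder : DifferentiableAt ℝ (fun σ : ℝ => x / 2 * ((1 + σ + u) ^ 2)⁻¹) σ :=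
        ((((hasDerivAt_w u σ).pow 2).inv hne).const_mul (x / 2)).differentiableAt
      exact ((hdiffat σ hσ0).add hder).differentiableWithinAt
    · intro σ hσ
      rw [interior_Icc] at hσ
      have hσ0 : 0 < σ := lt_of_le_of_lt ht hσ.1
      have h1 : (0:ℝ) < 1 + σ + u := by linarith
      have hne : ((1:ℝ) + σ + u) ^ 2 ≠ 0 := by positivity
      have hd2 : HasDerivAt (fun σ : ℝ => x / 2 * ((1 + σ + u) ^ 2)⁻¹)
          (-(x / (1 + σ + u) ^ 3)) σ := by
        have := (((hasDerivAt_w u σ).pow 2).inv hne).const_mul (x / 2)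
        refine this.congr_deriv ?_
        simp only [Pi.pow_apply]
        field_simp
        ring
      have hsum := ((hdiffat σ hσ0).hasDerivAt.add hd2)
      rw [(show HasDerivAt (fun σ => f σ + x / 2 * ((1 + σ + u) ^ 2)⁻¹) _ σ from hsum).deriv]
      have hb := hdb σ hσ0
      linarith
  have h1 := key (⟨le_rfl, hts⟩ : t ∈ Icc t s) (⟨hts, le_rfl⟩ : s ∈ Icc t s) hts
  simp only at h1
  linarith

private lemma abs_sub_le_of_abs_deriv_le {f : ℝ → ℝ} {x u : ℝ}
    (hcont : ContinuousOn f (Ici 0))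
    (hdiffat : ∀ t : ℝ, 0 < t → DifferentiableAt ℝ f t)
    (hdb : ∀ t : ℝ, 0 < t → |deriv f t| ≤ x / (1 + t + u) ^ 3)
    (hu : 0 ≤ u) {s t : ℝ} (ht : 0 ≤ t) (hts : t ≤ s) :
    |f s - f t| ≤ x / 2 * (((1 + t + u) ^ 2)⁻¹ - ((1 + s + u) ^ 2)⁻¹) := by
  have h1 := sub_le_of_deriv_le hcont hdiffat
    (fun τ hτ => le_trans (le_abs_self _) (hdb τ hτ)) hu ht hts
  have h2 := sub_le_of_deriv_le hcont.neg (fun τ hτ => (hdiffat τ hτ).neg)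
    (fun τ hτ => by rw [deriv.neg]; exact le_trans (neg_le_abs _) (hdb τ hτ)) hu ht hts
  rw [abs_le]
  constructor <;> simp only [Pi.neg_apply] at h1 h2 <;> linarith

private lemma F_le_Phi {D S t v w x : ℝ} (ht : 0 < t) (hv : 1 ≤ v) (hw : 1 ≤ w)
    (hx : 0 ≤ x)
    (hD2 : D ^ 2 ≤ (x / 2 * (t / (v * w ^ 2))) ^ 2)
    (hS0 : 0 ≤ S) (hS : S ≤ D ^ 2) :
    (D ^ 2 / t) * (1 + 2 * S / t ^ 2) ≤ (x ^ 2 + x ^ 4) / (4 * v ^ 2) * (t / w ^ 4) := by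
  have hv0 : (0:ℝ) < v := by linarith
  have hw0 : (0:ℝ) < w := by linarith
  set B2 : ℝ := (x / 2 * (t / (v * w ^ 2))) ^ 2 with hB2def
  have hB20 : 0 ≤ B2 := sq_nonneg _
  have hprod : D ^ 2 * S ≤ B2 * B2 := mul_le_mul hD2 (hS.trans hD2) hS0 hB20
  have key1 : (D ^ 2 / t) * (1 + 2 * S / t ^ 2) = D ^ 2 / t + 2 * (D ^ 2 * S) / t ^ 3 := by
    field_simp
  have k1 : D ^ 2 / t ≤ B2 / t := (div_le_div_iff_of_pos_right ht).mpr hD2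
  have k2 : 2 * (D ^ 2 * S) / t ^ 3 ≤ 2 * (B2 * B2) / t ^ 3 :=
    (div_le_div_iff_of_pos_right (by positivity : (0:ℝ) < t ^ 3)).mpr (by linarith)
  have e1 : B2 / t = x ^ 2 * t / (4 * v ^ 2 * w ^ 4) := by
    rw [hB2def]
    field_simp
    ring
  have e2 : 2 * (B2 * B2) / t ^ 3 = x ^ 4 * t / (8 * v ^ 4 * w ^ 8) := by
    rw [hB2def]
    field_simp
    ring
  have e3 : (x ^ 2 + x ^ 4) / (4 * v ^ 2) * (t / w ^ 4)
      = x ^ 2 * t / (4 * v ^ 2 * w ^ 4) + x ^ 4 * t / (4 * v ^ 2 * w ^ 4) := by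
    field_simp
  have h9 : x ^ 4 * t / (8 * v ^ 4 * w ^ 8) ≤ x ^ 4 * t / (4 * v ^ 2 * w ^ 4) := by
    have hA : v ^ 2 ≤ v ^ 4 := pow_le_pow_right₀ hv (by norm_num)
    have hB : w ^ 4 ≤ w ^ 8 := pow_le_pow_right₀ hw (by norm_num)
    have hm : v ^ 2 * w ^ 4 ≤ v ^ 4 * w ^ 8 := mul_le_mul hA hB (by positivity) (by positivity)
    rw [div_le_div_iff₀ (by positivity) (by positivity)]
    nlinarith [mul_le_mul_of_nonneg_left hm (show (0:ℝ) ≤ x ^ 4 * t by positivity),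
      mul_nonneg (mul_nonneg (show (0:ℝ) ≤ x ^ 4 * t by positivity)
        (show (0:ℝ) ≤ v ^ 4 by positivity)) (show (0:ℝ) ≤ w ^ 8 by positivity)]
  calc (D ^ 2 / t) * (1 + 2 * S / t ^ 2) = D ^ 2 / t + 2 * (D ^ 2 * S) / t ^ 3 := key1
    _ ≤ B2 / t + 2 * (B2 * B2) / t ^ 3 := by linarith
    _ = x ^ 2 * t / (4 * v ^ 2 * w ^ 4) + x ^ 4 * t / (8 * v ^ 4 * w ^ 8) := by rw [e1, e2]
    _ ≤ x ^ 2 * t / (4 * v ^ 2 * w ^ 4) + x ^ 4 * t / (4 * v ^ 2 * w ^ 4) := by linarith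
    _ = (x ^ 2 + x ^ 4) / (4 * v ^ 2) * (t / w ^ 4) := e3.symm

/-- **Bound on the deviation of `g` from its radial average.** If `‖h‖_X ≤ x` and
`|sin h̄| ≤ |h − h̄|` pointwise, then
`|g(u,r) − ḡ(u,r)| ≤ α(x²+x⁴)r²/(12(1+u)³(1+r+u)³)`. -/
theorem gmet_sub_gbar_bound
    (α x : ℝ) (hα : 0 < α)
    (h : ℝ → ℝ → ℝ)
    (hC1 : ContDiffOn ℝ 1 (fun p : ℝ × ℝ => h p.1 p.2) (Set.Ici 0 ×ˢ Set.Ici 0))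
    (hnorm : ∀ u : ℝ, 0 ≤ u → ∀ r : ℝ, 0 ≤ r →
      (1 + r + u) ^ 2 * |h u r| +
        (1 + r + u) ^ 3 * |deriv (fun r' => h u r') r| ≤ x)
    (hsin : ∀ u : ℝ, 0 ≤ u → ∀ r : ℝ, 0 < r →
      |Real.sin (hbar h u r)| ≤ |h u r - hbar h u r|) :
    ∀ u : ℝ, 0 ≤ u → ∀ r : ℝ, 0 < r →
      |gmet α h u r - gbarm α h u r| ≤
        α * (x ^ 2 + x ^ 4) * r ^ 2 / (12 * (1 + u) ^ 3 * (1 + r + u) ^ 3) := by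
  intro u hu r hr
  have hx0 : 0 ≤ x := le_trans (by positivity) (hnorm 0 le_rfl 0 le_rfl)
  have hv : (0:ℝ) < 1 + u := by linarith
  set F : ℝ → ℝ := fun s =>
    ((h u s - hbar h u s) ^ 2 / s) * (1 + 2 * Real.sin (hbar h u s) ^ 2 / s ^ 2) with hFdef
  set c : ℝ := (x ^ 2 + x ^ 4) / (4 * (1 + u) ^ 2) with hcdef
  have hc0 : 0 ≤ c := by positivity
  -- continuity of the slice
  have hcont : ContinuousOn (fun t : ℝ => h u t) (Ici 0) := by
    have h2 : ContinuousOn (fun p : ℝ × ℝ => h p.1 p.2) (Ici 0 ×ˢ Ici 0) := hC1.continuousOn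
    have h3 : ContinuousOn (fun t : ℝ => ((u, t) : ℝ × ℝ)) (Ici 0) :=
      (continuous_const.prodMk continuous_id).continuousOn
    exact h2.comp h3 (fun t ht => Set.mem_prod.mpr ⟨hu, ht⟩)
  have hderiv_bound : ∀ t : ℝ, 0 ≤ t → |deriv (fun r' => h u r') t| ≤ x / (1 + t + u) ^ 3 := by
    intro t ht
    have h1 := hnorm u hu t ht
    have h2 : (0:ℝ) < (1 + t + u) ^ 3 := by positivity
    rw [le_div_iff₀ h2]
    have h3 : 0 ≤ (1 + t + u) ^ 2 * |h u t| := by positivity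
    linarith [mul_comm (|deriv (fun r' => h u r') t|) ((1 + t + u) ^ 3)]
  have hdiffat : ∀ t : ℝ, 0 < t → DifferentiableAt ℝ (fun r' => h u r') t := by
    intro t ht
    have hf := (hC1.differentiableOn (by norm_num)) (u, t) (Set.mem_prod.mpr ⟨hu, le_of_lt ht⟩)
    have hg : DifferentiableWithinAt ℝ (fun ρ : ℝ => ((u, ρ) : ℝ × ℝ)) (Ici 0) t :=
      ((differentiableAt_const u).prodMk differentiableAt_id).differentiableWithinAt
    have h2 : DifferentiableWithinAt ℝ (fun ρ : ℝ => h u ρ) (Ici 0) t :=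
      hf.comp t hg (fun ρ hρ => Set.mem_prod.mpr ⟨hu, hρ⟩)
    exact h2.differentiableAt (Ici_mem_nhds ht)
  have hdiff : ∀ s t : ℝ, 0 ≤ t → t ≤ s →
      |h u s - h u t| ≤ x / 2 * (((1 + t + u) ^ 2)⁻¹ - ((1 + s + u) ^ 2)⁻¹) :=
    fun s t ht hts => abs_sub_le_of_abs_deriv_le hcont hdiffat
      (fun τ hτ => hderiv_bound τ hτ.le) hu ht hts
  -- bound on |h - h̄|
  have hHB : ∀ t : ℝ, 0 < t →
      |h u t - hbar h u t| ≤ x / 2 * (t / ((1 + u) * (1 + t + u) ^ 2)) := by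
    intro t ht0
    have hw : (0:ℝ) < 1 + t + u := by linarith
    have hIccIci : Icc (0:ℝ) t ⊆ Ici 0 := fun σ hσ => hσ.1
    have hint : IntervalIntegrable (fun τ => h u τ) volume 0 t := by
      apply ContinuousOn.intervalIntegrable
      rw [uIcc_of_le ht0.le]
      exact hcont.mono hIccIci
    have hid : h u t - hbar h u t = (1/t) * ∫ τ in (0:ℝ)..t, (h u t - h u τ) := by
      rw [intervalIntegral.integral_sub intervalIntegrable_const hint,
        intervalIntegral.integral_const]
      simp only [hbar, smul_eq_mul]
      field_simp
      ring
    have hcb : ContinuousOn (fun τ : ℝ => ((1 + τ + u) ^ 2)⁻¹) (Icc 0 t) := by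
      apply ContinuousOn.inv₀ (by fun_prop)
      intro σ hσ
      have h5 : (0:ℝ) < 1 + σ + u := by linarith [hσ.1]
      positivity
    have hint2 : IntervalIntegrable (fun τ : ℝ => ((1 + τ + u) ^ 2)⁻¹) volume 0 t := by
      apply ContinuousOn.intervalIntegrable
      rw [uIcc_of_le ht0.le]
      exact hcb
    have habs_int : IntervalIntegrable (fun τ => |h u t - h u τ|) volume 0 t := by
      apply ContinuousOn.intervalIntegrable
      rw [uIcc_of_le ht0.le]
      exact (continuousOn_const.sub (hcont.mono hIccIci)).abs
    have hboundint : IntervalIntegrable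
        (fun τ : ℝ => x/2 * (((1+τ+u)^2)⁻¹ - ((1+t+u)^2)⁻¹)) volume 0 t :=
      (hint2.sub intervalIntegrable_const).const_mul _
    have h1 : |∫ τ in (0:ℝ)..t, (h u t - h u τ)|
        ≤ ∫ τ in (0:ℝ)..t, x/2 * (((1+τ+u)^2)⁻¹ - ((1+t+u)^2)⁻¹) := by
      calc |∫ τ in (0:ℝ)..t, (h u t - h u τ)| ≤ ∫ τ in (0:ℝ)..t, |h u t - h u τ| :=
            intervalIntegral.abs_integral_le_integral_abs ht0.le
        _ ≤ _ := intervalIntegral.integral_mono_on ht0.le habs_int hboundint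
              (fun τ hτ => hdiff t τ hτ.1 hτ.2)
    have h3 : (∫ τ in (0:ℝ)..t, ((1+τ+u)^2)⁻¹) = (-((1+t+u)⁻¹)) - (-((1+0+u)⁻¹)) := by
      apply intervalIntegral.integral_eq_sub_of_hasDerivAt
      · intro σ hσ
        rw [uIcc_of_le ht0.le] at hσ
        exact hasDerivAt_Nfn u σ (by linarith [hσ.1])
      · exact hint2
    have h2 : (∫ τ in (0:ℝ)..t, x/2 * (((1+τ+u)^2)⁻¹ - ((1+t+u)^2)⁻¹))
        = x/2 * (((-((1+t+u)⁻¹)) - (-((1+0+u)⁻¹))) - t * ((1+t+u)^2)⁻¹) := by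
      rw [intervalIntegral.integral_const_mul,
        intervalIntegral.integral_sub hint2 intervalIntegrable_const,
        intervalIntegral.integral_const, h3]
      simp [smul_eq_mul]
    have h4 : (1/t) * (x/2 * (((-((1+t+u)⁻¹)) - (-((1+0+u)⁻¹))) - t * ((1+t+u)^2)⁻¹))
        = x/2 * (t / ((1 + u) * (1 + t + u) ^ 2)) := by
      have hne1 : (1:ℝ)+u ≠ 0 := ne_of_gt hv
      have hne2 : (1:ℝ)+t+u ≠ 0 := ne_of_gt hw
      have hne3 : t ≠ 0 := ne_of_gt ht0
      rw [show (1:ℝ)+0+u = 1+u by ring]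
      field_simp
      ring
    rw [hid, abs_mul, abs_of_pos (by positivity : (0:ℝ) < 1/t), ← h4]
    exact mul_le_mul_of_nonneg_left (le_of_le_of_eq h1 h2) (by positivity)
  -- pointwise bound on F
  have hF0 : ∀ t : ℝ, 0 < t → 0 ≤ F t := by
    intro t ht
    apply mul_nonneg (div_nonneg (sq_nonneg _) ht.le)
    positivity
  have hFPhi : ∀ t : ℝ, 0 < t → F t ≤ c * (t / (1 + t + u) ^ 4) := by
    intro t ht
    have hw1 : (1:ℝ) ≤ 1 + t + u := by linarith
    have hv1 : (1:ℝ) ≤ 1 + u := by linarith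
    have hD := hHB t ht
    have hD2 : (h u t - hbar h u t)^2 ≤ (x/2 * (t/((1+u)*(1+t+u)^2)))^2 := by
      rw [← sq_abs (h u t - hbar h u t)]
      exact pow_le_pow_left₀ (abs_nonneg _) hD 2
    have hS : Real.sin (hbar h u t)^2 ≤ (h u t - hbar h u t)^2 := by
      rw [← sq_abs (Real.sin (hbar h u t)), ← sq_abs (h u t - hbar h u t)]
      exact pow_le_pow_left₀ (abs_nonneg _) (hsin u hu t ht) 2
    have hmain := F_le_Phi ht hv1 hw1 hx0 hD2 (sq_nonneg _) hS
    simpa only [hFdef, hcdef] using hmain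
  -- integrability
  have hPhiInt : IntegrableOn (fun t : ℝ => t / (1 + t + u) ^ 4) (Ioi 0) := by
    have hc0' : ContinuousWithinAt (Afn u) (Ici 0) 0 :=
      (hasDerivAt_Afn u 0 (by linarith)).continuousAt.continuousWithinAt
    have hd : ∀ t ∈ Ioi (0:ℝ), HasDerivAt (Afn u) (t/(1+t+u)^4) t := fun t htm =>
      hasDerivAt_Afn u t (by have := mem_Ioi.mp htm; linarith)
    have hnn : ∀ t ∈ Ioi (0:ℝ), 0 ≤ t/(1+t+u)^4 := fun t htm =>
      div_nonneg (le_of_lt (mem_Ioi.mp htm)) (by positivity)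
    have hwt : Filter.Tendsto (fun t : ℝ => 1 + t + u) Filter.atTop Filter.atTop := by
      apply Filter.tendsto_atTop_add_const_right
      apply Filter.tendsto_atTop_add_const_left
      exact Filter.tendsto_id
    have hinv : Filter.Tendsto (fun t : ℝ => (1+t+u)⁻¹) Filter.atTop (nhds 0) :=
      hwt.inv_tendsto_atTop
    have h2 : Filter.Tendsto (fun t : ℝ => -(1/2) * ((1+t+u)⁻¹)^2 + ((1+u)/3) * ((1+t+u)⁻¹)^3)
        Filter.atTop (nhds (-(1/2) * 0^2 + ((1+u)/3) * 0^3)) :=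
      ((hinv.pow 2).const_mul (-(1/2))).add ((hinv.pow 3).const_mul ((1+u)/3))
    have h2' : Filter.Tendsto (Afn u) Filter.atTop (nhds 0) := by
      have h5 : -(1/2 : ℝ) * 0^2 + ((1+u)/3) * 0^3 = 0 := by norm_num
      rw [h5] at h2
      exact h2
    exact integrableOn_Ioi_deriv_of_nonneg hc0' hd hnn h2'
  have hbarc : ContinuousOn (fun t : ℝ => hbar h u t) (Ioi 0) := by
    intro t ht
    have ht0 : (0:ℝ) < t := ht
    apply ContinuousAt.continuousWithinAt
    have hIcc : IntegrableOn (fun s => h u s) (uIcc 0 (t+1)) volume := by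
      rw [uIcc_of_le (by linarith)]
      exact (hcont.mono (fun σ hσ => hσ.1)).integrableOn_Icc
    have hprim := intervalIntegral.continuousOn_primitive_interval hIcc
    have hmem : uIcc (0:ℝ) (t+1) ∈ nhds t := by
      rw [uIcc_of_le (by linarith)]
      exact Icc_mem_nhds ht0 (by linarith)
    have hI : ContinuousAt (fun τ : ℝ => ∫ s in (0:ℝ)..τ, h u s) t := hprim.continuousAt hmem
    exact (continuousAt_const.div continuousAt_id (ne_of_gt ht0)).mul hI
  have hFcont : ContinuousOn F (Ioi 0) := by
    rw [hFdef]
    apply ContinuousOn.mul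
    · exact ((((hcont.mono Ioi_subset_Ici_self).sub hbarc).pow 2).div
        continuousOn_id (fun t ht => ne_of_gt ht))
    · apply ContinuousOn.add continuousOn_const
      apply ContinuousOn.div
      · exact continuousOn_const.mul ((Real.continuous_sin.comp_continuousOn hbarc).pow 2)
      · exact (continuous_pow 2).continuousOn
      · intro t ht
        exact pow_ne_zero 2 (ne_of_gt ht)
  have hFint : IntegrableOn F (Ioi 0) := by
    apply Integrable.mono' (hPhiInt.const_mul c)
      (hFcont.aestronglyMeasurable measurableSet_Ioi)
    filter_upwards [ae_restrict_mem measurableSet_Ioi] with t ht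
    rw [Real.norm_eq_abs, abs_of_nonneg (hF0 t ht)]
    exact hFPhi t ht
  set I : ℝ → ℝ := fun s => ∫ t in Ioi s, F t with hIdef
  have hgI : ∀ s : ℝ, gmet α h u s = Real.exp (-α * I s) := fun s => rfl
  have hFints : ∀ s : ℝ, 0 ≤ s → IntegrableOn F (Ioi s) :=
    fun s hs => hFint.mono_set (Ioi_subset_Ioi hs)
  have hFintIoc : ∀ s s' : ℝ, 0 ≤ s → IntegrableOn F (Ioc s s') :=
    fun s s' hs => hFint.mono_set (fun τ hτ => lt_of_le_of_lt hs hτ.1)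
  have hsplit : ∀ s s' : ℝ, 0 ≤ s → s ≤ s' → I s = (∫ t in Ioc s s', F t) + I s' := by
    intro s s' hs hss
    have hun := setIntegral_union (Ioc_disjoint_Ioi (le_refl s')) measurableSet_Ioi
      (hFintIoc s s' hs) (hFints s' (hs.trans hss))
    simp only [hIdef]
    rw [← hun, Ioc_union_Ioi_eq_Ioi hss]
  have hInn : ∀ s : ℝ, 0 ≤ s → 0 ≤ I s :=
    fun s hs => setIntegral_nonneg measurableSet_Ioi (fun t htm => hF0 t (lt_of_le_of_lt hs htm))
  have hIocnn : ∀ s s' : ℝ, 0 ≤ s → 0 ≤ ∫ t in Ioc s s', F t :=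
    fun s s' hs => setIntegral_nonneg measurableSet_Ioc
      (fun t htm => hF0 t (lt_of_le_of_lt hs htm.1))
  have hIocA : ∀ s s' : ℝ, 0 ≤ s → s ≤ s' →
      (∫ t in Ioc s s', F t) ≤ c * (Afn u s' - Afn u s) := by
    intro s s' hs hss
    have hsub : Ioc s s' ⊆ Ioi (0:ℝ) := fun τ hτ => lt_of_le_of_lt hs hτ.1
    have hPhiC : IntegrableOn (fun t : ℝ => c * (t/(1+t+u)^4)) (Ioi 0) :=
      hPhiInt.const_mul c
    have h1 : (∫ t in Ioc s s', F t) ≤ ∫ t in Ioc s s', c * (t/(1+t+u)^4) :=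
      setIntegral_mono_on (hFint.mono_set hsub) (hPhiC.mono_set hsub)
        measurableSet_Ioc (fun t htm => hFPhi t (hsub htm))
    have h2 : (∫ t in Ioc s s', c * (t/(1+t+u)^4)) = ∫ t in s..s', c * (t/(1+t+u)^4) :=
      (intervalIntegral.integral_of_le hss).symm
    have hii : IntervalIntegrable (fun t : ℝ => t/(1+t+u)^4) volume s s' := by
      apply ContinuousOn.intervalIntegrable
      rw [uIcc_of_le hss]
      apply ContinuousOn.div continuousOn_id (by fun_prop)
      intro σ hσ
      have h5 : (0:ℝ) < 1 + σ + u := by linarith [hσ.1]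
      positivity
    have h3 : (∫ t in s..s', c * (t/(1+t+u)^4)) = c * (Afn u s' - Afn u s) := by
      rw [intervalIntegral.integral_const_mul]
      congr 1
      apply intervalIntegral.integral_eq_sub_of_hasDerivAt
      · intro σ hσ
        rw [uIcc_of_le hss] at hσ
        exact hasDerivAt_Afn u σ (by linarith [hσ.1])
      · exact hii
    exact le_of_le_of_eq h1 (h2.trans h3)
  -- monotonicity of g
  have gmono : MonotoneOn (fun s => gmet α h u s) (Icc 0 r) := by
    intro s hsm s' hsm' hss
    simp only [hgI]
    apply Real.exp_le_exp.mpr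
    have h1 : I s' ≤ I s := by
      rw [hsplit s s' hsm.1 hss]
      linarith [hIocnn s s' hsm.1]
    nlinarith
  have gint : IntervalIntegrable (fun s => gmet α h u s) volume 0 r := by
    apply MonotoneOn.intervalIntegrable
    rw [uIcc_of_le hr.le]
    exact gmono
  -- pointwise bound for g r - g s
  have hgpt : ∀ s ∈ Icc (0:ℝ) r, gmet α h u r - gmet α h u s ≤ α * c * (Afn u r - Afn u s) := by
    intro s hsm
    simp only [hgI]
    have hIr : 0 ≤ I r := hInn r hr.le
    have hIs : I r ≤ I s := by
      rw [hsplit s r hsm.1 hsm.2]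
      linarith [hIocnn s r hsm.1]
    have h1 : -α * I s ≤ -α * I r := by nlinarith
    have h2 : -α * I r ≤ 0 := by nlinarith
    have h3 := exp_sub_exp_le h2 h1
    have h4 : (-α * I r) - (-α * I s) = α * (∫ t in Ioc s r, F t) := by
      rw [hsplit s r hsm.1 hsm.2]; ring
    calc Real.exp (-α * I r) - Real.exp (-α * I s) ≤ (-α * I r) - (-α * I s) := h3
      _ = α * (∫ t in Ioc s r, F t) := h4
      _ ≤ α * (c * (Afn u r - Afn u s)) :=
          mul_le_mul_of_nonneg_left (hIocA s r hsm.1 hsm.2) hα.le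
      _ = α * c * (Afn u r - Afn u s) := by ring
  -- integrability of Afn on [0, r]
  have hAcont : ContinuousOn (Afn u) (Icc 0 r) := fun s hs =>
    (hasDerivAt_Afn u s (by linarith [hs.1])).continuousAt.continuousWithinAt
  have hAint : IntervalIntegrable (Afn u) volume 0 r := by
    apply ContinuousOn.intervalIntegrable
    rw [uIcc_of_le hr.le]
    exact hAcont
  -- assembly
  have hgbar_le : (∫ s in (0:ℝ)..r, gmet α h u s) ≤ r * gmet α h u r := by
    calc (∫ s in (0:ℝ)..r, gmet α h u s) ≤ ∫ _ in (0:ℝ)..r, gmet α h u r :=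
          intervalIntegral.integral_mono_on hr.le gint intervalIntegrable_const
            (fun s hs => gmono hs ⟨hr.le, le_rfl⟩ hs.2)
      _ = r * gmet α h u r := by simp
  have hnn : 0 ≤ gmet α h u r - gbarm α h u r := by
    have h5 : gbarm α h u r ≤ gmet α h u r := by
      have h6 : gbarm α h u r ≤ (1/r) * (r * gmet α h u r) := by
        unfold gbarm
        apply mul_le_mul_of_nonneg_left hgbar_le (by positivity)
      have h7 : (1/r) * (r * gmet α h u r) = gmet α h u r := by field_simp
      linarith
    linarith
  rw [abs_of_nonneg hnn]
  have key1 : gmet α h u r - gbarm α h u r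
      = (1/r) * ∫ s in (0:ℝ)..r, (gmet α h u r - gmet α h u s) := by
    rw [intervalIntegral.integral_sub intervalIntegrable_const gint,
      intervalIntegral.integral_const]
    unfold gbarm
    have : (r - 0) • gmet α h u r = r * gmet α h u r := by simp
    rw [this]
    field_simp
  rw [key1]
  have key2 : (∫ s in (0:ℝ)..r, (gmet α h u r - gmet α h u s))
      ≤ ∫ s in (0:ℝ)..r, α * c * (Afn u r - Afn u s) := by
    apply intervalIntegral.integral_mono_on hr.le (intervalIntegrable_const.sub gint)
      (((intervalIntegrable_const (c := Afn u r)).sub hAint).const_mul (α * c)) hgpt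
  have key3 : (∫ s in (0:ℝ)..r, α * c * (Afn u r - Afn u s))
      = α * c * (r * Afn u r - (A2fn u r - A2fn u 0)) := by
    rw [intervalIntegral.integral_const_mul,
      intervalIntegral.integral_sub intervalIntegrable_const hAint,
      intervalIntegral.integral_const]
    have hA2 : (∫ s in (0:ℝ)..r, Afn u s) = A2fn u r - A2fn u 0 :=
      intervalIntegral.integral_eq_sub_of_hasDerivAt
        (fun σ hσ => hasDerivAt_A2fn u σ (by rw [uIcc_of_le hr.le] at hσ; linarith [hσ.1]))
        hAint
    rw [hA2]
    simp
  calc (1/r) * ∫ s in (0:ℝ)..r, (gmet α h u r - gmet α h u s)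
      ≤ (1/r) * (α * c * (r * Afn u r - (A2fn u r - A2fn u 0))) := by
        rw [← key3]
        exact mul_le_mul_of_nonneg_left key2 (by positivity)
    _ = α * (x ^ 2 + x ^ 4) * r ^ 2 / (12 * (1 + u) ^ 3 * (1 + r + u) ^ 3) := by
        simp only [Afn, A2fn, hcdef]
        have h1 : (1:ℝ) + u ≠ 0 := ne_of_gt hv
        have h2 : (1:ℝ) + r + u ≠ 0 := by positivity
        have h3 : r ≠ 0 := ne_of_gt hr
        have h4 : (1:ℝ) + 0 + u ≠ 0 := by
          rw [add_zero]; exact h1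
        field_simp
        ring


end
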